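/- For every rooted graph G with root v and every real x ≥ 2, letting y = x/2 - √(x²/4 - 1), the following are equivalent: λ₁(G, 0^∞) ≥ -x, and the matrix A_G + xI - y·E_{v,v} is positive semidefinite, where A_G is the adjacency matrix of G and E_{v,v} is the matrix whose only nonzero entry is a 1 in position (v,v). -/

import Mathlib

/-- A rooted graph: a finite simple graph with a distinguished root vertex. -/
structure RootedGraph where
  V : Type
  [fintypeV : Fintype V]
  G : SimpleGraph V
  root : V

attribute [instance] RootedGraph.fintypeV

/-- One-step extension of a rooted graph: attach a new path vertex (the new root)
to the old root, together with a clique of `k` new vertices each adjacent to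
both the old root and the new path vertex. -/
def RootedGraph.extend (F : RootedGraph) (k : ℕ) : RootedGraph where
  V := F.V ⊕ Option (Fin k)
  G :=
    { Adj := fun a b =>
        match a, b with
        | Sum.inl u, Sum.inl w => F.G.Adj u w
        | Sum.inl u, Sum.inr _ => u = F.root
        | Sum.inr _, Sum.inl w => w = F.root
        | Sum.inr x, Sum.inr y => x ≠ y
      symm := ⟨by
        rintro (u | x) (w | y) h
        · exact F.G.adj_symm h
        · exact h
        · exact h
        · exact h.symm⟩
      loopless := ⟨by
        rintro (u | x) h
        · exact F.G.loopless.irrefl u h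
        · exact h rfl⟩ }
  root := Sum.inr none

/-- The rowing graph `(F, a)`. -/
def RootedGraph.rowing (F : RootedGraph) (a : List ℕ) : RootedGraph :=
  a.foldl RootedGraph.extend F

open scoped Classical in
/-- Adjacency matrix of (the graph of) a rooted graph. -/
noncomputable def RootedGraph.adjMat (F : RootedGraph) : Matrix F.V F.V ℝ :=
  Matrix.of fun u v => if F.G.Adj u v then 1 else 0

/-- The smallest adjacency eigenvalue of a rooted graph. -/
noncomputable def RootedGraph.lam1 (F : RootedGraph) : ℝ :=
  sInf {t : ℝ | ∃ x : F.V → ℝ, x ≠ 0 ∧ F.adjMat.mulVec x = t • x}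

open Matrix

section aux
variable {n : Type} [Fintype n] [DecidableEq n]

lemma qf_std (v : n) (z : n → ℝ) :
    z ⬝ᵥ (Matrix.single v v (1:ℝ) *ᵥ z) = z v * z v := by
  simp only [dotProduct, Matrix.mulVec, Matrix.single, Matrix.of_apply]
  rw [Finset.sum_eq_single v]
  · rw [Finset.sum_eq_single v]
    · simp
    · intro b _ hb; simp [Ne.symm hb]
    · simp
  · intro b _ hb
    rw [Finset.sum_eq_zero] <;> simp +contextual [Ne.symm hb]
  · simp

lemma qf_split (A : Matrix n n ℝ) (x y : ℝ) (v : n) (z : n → ℝ) :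
    z ⬝ᵥ ((A + x • (1 : Matrix n n ℝ) - y • Matrix.single v v 1) *ᵥ z)
      = z ⬝ᵥ (A *ᵥ z) + x * (z ⬝ᵥ z) - y * (z v * z v) := by
  rw [sub_mulVec, add_mulVec, dotProduct_sub, dotProduct_add, smul_mulVec,
    smul_mulVec, one_mulVec, dotProduct_smul, dotProduct_smul, qf_std]
  simp [smul_eq_mul]

lemma std_herm (v : n) : (Matrix.single v v (1:ℝ)).IsHermitian := by
  ext i j
  simp only [Matrix.conjTranspose_apply, Matrix.single, Matrix.of_apply, star_trivial]
  by_cases h1 : v = i <;> by_cases h2 : v = j <;> simp [h1, h2]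

lemma smul_herm {A : Matrix n n ℝ} (c : ℝ) (h : A.IsHermitian) : (c • A).IsHermitian := by
  unfold Matrix.IsHermitian at *
  rw [Matrix.conjTranspose_smul, h, star_trivial]

end aux

lemma adj_herm (F : RootedGraph) : F.adjMat.IsHermitian := by
  classical
  ext u w
  simp only [RootedGraph.adjMat, Matrix.conjTranspose_apply, Matrix.of_apply, star_trivial]
  by_cases h : F.G.Adj u w
  · simp [h, F.G.adj_symm h]
  · have h' : ¬ F.G.Adj w u := fun hh => h (F.G.adj_symm hh)
    simp [h, h']

open scoped Classical in
lemma M_herm (F : RootedGraph) (x y : ℝ) :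
    (F.adjMat + x • (1 : Matrix F.V F.V ℝ) -
      y • Matrix.single F.root F.root 1).IsHermitian :=
  ((adj_herm F).add (smul_herm x Matrix.isHermitian_one)).sub
    (smul_herm y (std_herm _))

open scoped Classical in
lemma qf_adj_extend (F : RootedGraph) (z : (F.extend 0).V → ℝ) :
    z ⬝ᵥ ((F.extend 0).adjMat *ᵥ z)
      = (z ∘ Sum.inl) ⬝ᵥ (F.adjMat *ᵥ (z ∘ Sum.inl))
        + 2 * z (Sum.inl F.root) * z (Sum.inr none) := by
  have key : ∀ f : (F.extend 0).V → ℝ,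
      ∑ a, f a = (∑ u : F.V, f (Sum.inl u)) + f (Sum.inr none) := by
    intro f
    have h1 : ∑ a : F.V ⊕ Option (Fin 0), f a
        = (∑ u : F.V, f (Sum.inl u)) + ∑ o : Option (Fin 0), f (Sum.inr o) :=
      Fintype.sum_sum_type f
    have h2 : ∑ o : Option (Fin 0), f (Sum.inr o) = f (Sum.inr none) := by
      rw [Fintype.sum_option]; simp
    exact h1.trans (by rw [h2])
  have e1 : z ⬝ᵥ ((F.extend 0).adjMat *ᵥ z)
      = ∑ a, z a * ∑ b, (F.extend 0).adjMat a b * z b := rfl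
  have eBll : ∀ u w, (F.extend 0).adjMat (Sum.inl u) (Sum.inl w) = F.adjMat u w :=
    fun _ _ => rfl
  have eBlr : ∀ u, (F.extend 0).adjMat (Sum.inl u) (Sum.inr none)
      = if u = F.root then 1 else 0 := fun _ => rfl
  have eBrl : ∀ w, (F.extend 0).adjMat (Sum.inr none) (Sum.inl w)
      = if w = F.root then 1 else 0 := fun _ => rfl
  have eBrr : (F.extend 0).adjMat (Sum.inr none) (Sum.inr none) = 0 := by
    show (if (F.extend 0).G.Adj (Sum.inr none) (Sum.inr none) then (1:ℝ) else 0) = 0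
    rw [if_neg]
    show ¬ (none : Option (Fin 0)) ≠ none
    simp
  have e2 : (z ∘ Sum.inl) ⬝ᵥ (F.adjMat *ᵥ (z ∘ Sum.inl))
      = ∑ u, z (Sum.inl u) * ∑ w, F.adjMat u w * z (Sum.inl w) := rfl
  rw [e1, e2]
  simp only [key, eBll, eBlr, eBrl, eBrr]
  simp only [mul_add, add_mul, Finset.sum_add_distrib, ite_mul, zero_mul, one_mul,
    mul_ite, mul_zero, mul_one, Finset.sum_ite_eq', Finset.mem_univ, if_true, zero_add]
  ring

open scoped Classical in
lemma qf_extend (F : RootedGraph) (x y : ℝ) (z : (F.extend 0).V → ℝ) :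
    z ⬝ᵥ (((F.extend 0).adjMat + x • (1 : Matrix (F.extend 0).V (F.extend 0).V ℝ) -
        y • Matrix.single (F.extend 0).root (F.extend 0).root 1) *ᵥ z)
      = (z ∘ Sum.inl) ⬝ᵥ ((F.adjMat + x • (1 : Matrix F.V F.V ℝ) -
          y • Matrix.single F.root F.root 1) *ᵥ (z ∘ Sum.inl))
        + y * (z (Sum.inl F.root) * z (Sum.inl F.root))
        + 2 * z (Sum.inl F.root) * z (Sum.inr none)
        + (x - y) * (z (Sum.inr none) * z (Sum.inr none)) := by
  rw [qf_split, qf_split, qf_adj_extend]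
  have hdot : z ⬝ᵥ z = (z ∘ Sum.inl) ⬝ᵥ (z ∘ Sum.inl) + z (Sum.inr none) * z (Sum.inr none) := by
    have key : ∀ f : (F.extend 0).V → ℝ,
        ∑ a, f a = (∑ u : F.V, f (Sum.inl u)) + f (Sum.inr none) := by
      intro f
      have h1 : ∑ a : F.V ⊕ Option (Fin 0), f a
          = (∑ u : F.V, f (Sum.inl u)) + ∑ o : Option (Fin 0), f (Sum.inr o) :=
        Fintype.sum_sum_type f
      have h2 : ∑ o : Option (Fin 0), f (Sum.inr o) = f (Sum.inr none) := by
        rw [Fintype.sum_option]; simp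
      exact h1.trans (by rw [h2])
    have e1 : z ⬝ᵥ z = ∑ a, z a * z a := rfl
    have e2 : (z ∘ Sum.inl) ⬝ᵥ (z ∘ Sum.inl) = ∑ u, z (Sum.inl u) * z (Sum.inl u) := rfl
    rw [e1, e2, key]
  have hroot : (F.extend 0).root = Sum.inr none := rfl
  rw [hdot, hroot]
  erw [Function.comp_apply]
  ring

open scoped Classical in
lemma step_psd (F : RootedGraph) (x y : ℝ) (hy0 : 0 < y) (hxy : y * y + 1 = x * y)
    (h : (F.adjMat + x • (1 : Matrix F.V F.V ℝ) -
      y • Matrix.single F.root F.root 1).PosSemidef) :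
    ((F.extend 0).adjMat + x • (1 : Matrix (F.extend 0).V (F.extend 0).V ℝ) -
      y • Matrix.single (F.extend 0).root (F.extend 0).root 1).PosSemidef := by
  refine Matrix.PosSemidef.of_dotProduct_mulVec_nonneg (M_herm _ _ _) fun z => ?_
  have hst : star z = z := funext fun _ => rfl
  rw [hst, qf_extend]
  have h2 := h.dotProduct_mulVec_nonneg (z ∘ Sum.inl)
  rw [show star (z ∘ Sum.inl) = z ∘ Sum.inl from funext fun _ => rfl] at h2
  set a := z (Sum.inl F.root)
  set t := z (Sum.inr (none : Option (Fin 0)))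
  nlinarith [sq_nonneg (y * a + t), sq_nonneg t, mul_pos hy0 hy0]

open scoped Classical in
lemma step_wit (F : RootedGraph) (x y : ℝ) (hy0 : y ≠ 0) (hxy : y * y + 1 = x * y)
    (z : F.V → ℝ) :
    (Sum.elim z fun _ => -y * z F.root) ⬝ᵥ
        (((F.extend 0).adjMat + x • (1 : Matrix (F.extend 0).V (F.extend 0).V ℝ) -
          y • Matrix.single (F.extend 0).root (F.extend 0).root 1) *ᵥ
          (Sum.elim z fun _ => -y * z F.root))
      = z ⬝ᵥ ((F.adjMat + x • (1 : Matrix F.V F.V ℝ) -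
          y • Matrix.single F.root F.root 1) *ᵥ z) := by
  erw [qf_extend]
  have hz : (Sum.elim z fun _ : Option (Fin 0) => -y * z F.root) ∘ Sum.inl = z :=
    funext fun _ => rfl
  erw [hz]
  simp only [Sum.elim_inl, Sum.elim_inr]
  have hx : x = (y * y + 1) / y := by field_simp; linarith
  subst hx
  field_simp
  ring

lemma rowing_succ (G : RootedGraph) (n : ℕ) :
    G.rowing (List.replicate (n + 1) 0) = (G.rowing (List.replicate n 0)).extend 0 := by
  rw [List.replicate_succ']
  unfold RootedGraph.rowing
  rw [List.foldl_append]
  rfl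

lemma rowing_zero (G : RootedGraph) : G.rowing (List.replicate 0 0) = G := rfl

open scoped Classical in
lemma psd_smul_std (F : RootedGraph) (y : ℝ) (hy : 0 ≤ y) :
    (y • Matrix.single F.root F.root (1:ℝ)).PosSemidef := by
  refine Matrix.PosSemidef.of_dotProduct_mulVec_nonneg (smul_herm y (std_herm _)) fun z => ?_
  rw [show star z = z from funext fun _ => rfl, smul_mulVec, dotProduct_smul,
    smul_eq_mul, qf_std]
  exact mul_nonneg hy (mul_self_nonneg _)

open scoped Classical in
lemma neg_le_lam1 (F : RootedGraph) (c : ℝ) (hc : 0 ≤ c)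
    (h : (F.adjMat + c • (1 : Matrix F.V F.V ℝ)).PosSemidef) : -c ≤ F.lam1 := by
  unfold RootedGraph.lam1
  by_cases hS : {t : ℝ | ∃ x : F.V → ℝ, x ≠ 0 ∧ F.adjMat.mulVec x = t • x}.Nonempty
  · refine le_csInf hS ?_
    rintro t ⟨v, hv, hev⟩
    have h2 := h.dotProduct_mulVec_nonneg v
    rw [show star v = v from funext fun _ => rfl, add_mulVec, smul_mulVec, one_mulVec,
      dotProduct_add, dotProduct_smul] at h2
    rw [show F.adjMat.mulVec v = F.adjMat *ᵥ v from rfl, hev, dotProduct_smul] at h2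
    have hvv : 0 < v ⬝ᵥ v := by
      have hnn : 0 ≤ v ⬝ᵥ v := Finset.sum_nonneg fun i _ => mul_self_nonneg _
      rcases lt_or_eq_of_le hnn with h' | h'
      · exact h'
      · exact absurd (dotProduct_self_eq_zero.mp h'.symm) hv
    simp only [smul_eq_mul] at h2
    nlinarith
  · rw [Set.not_nonempty_iff_eq_empty] at hS
    rw [hS, Real.sInf_empty]
    linarith

open scoped Classical in
lemma psd_of_neg_le_lam1 (F : RootedGraph) (c : ℝ) (h : -c ≤ F.lam1) :
    (F.adjMat + c • (1 : Matrix F.V F.V ℝ)).PosSemidef := by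
  have hA : F.adjMat.IsHermitian := adj_herm F
  have h01 : ∀ u w, F.adjMat u w = 0 ∨ F.adjMat u w = 1 := by
    intro u w
    by_cases hh : F.G.Adj u w <;> simp [RootedGraph.adjMat, hh]
  -- the eigenvalue set is bounded below
  have hbdd : BddBelow {t : ℝ | ∃ x : F.V → ℝ, x ≠ 0 ∧ F.adjMat.mulVec x = t • x} := by
    refine ⟨-(Fintype.card F.V : ℝ), ?_⟩
    rintro t ⟨v, hv, hev⟩
    have hvv : 0 < v ⬝ᵥ v := by
      have hnn : 0 ≤ v ⬝ᵥ v := Finset.sum_nonneg fun i _ => mul_self_nonneg _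
      rcases lt_or_eq_of_le hnn with h' | h'
      · exact h'
      · exact absurd (dotProduct_self_eq_zero.mp h'.symm) hv
    have hqf : v ⬝ᵥ (F.adjMat *ᵥ v) = t * (v ⬝ᵥ v) := by
      rw [show F.adjMat.mulVec v = F.adjMat *ᵥ v from rfl] at hev
      rw [hev, dotProduct_smul, smul_eq_mul]
    have hexp : v ⬝ᵥ (F.adjMat *ᵥ v) = ∑ u, ∑ w, v u * (F.adjMat u w * v w) := by
      simp [dotProduct, Matrix.mulVec, Finset.mul_sum]
    have habs : |v ⬝ᵥ (F.adjMat *ᵥ v)| ≤ ∑ u, ∑ w, |v u| * |v w| := by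
      rw [hexp]
      refine (Finset.abs_sum_le_sum_abs _ _).trans (Finset.sum_le_sum fun u _ => ?_)
      refine (Finset.abs_sum_le_sum_abs _ _).trans (Finset.sum_le_sum fun w _ => ?_)
      rcases h01 u w with hh | hh
      · simp [hh]
        exact mul_nonneg (abs_nonneg _) (abs_nonneg _)
      · rw [hh, one_mul, abs_mul]
    have hsq : ∑ u, ∑ w, |v u| * |v w| = (∑ u, |v u|)^2 := by
      rw [sq, Finset.sum_mul_sum]
    have hcard : (∑ u, |v u|)^2 ≤ (Fintype.card F.V : ℝ) * ∑ u, |v u|^2 := by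
      simpa using sq_sum_le_card_mul_sum_sq (s := (Finset.univ : Finset F.V))
        (f := fun u => |v u|)
    have hvv2 : ∑ u, |v u|^2 = v ⬝ᵥ v := by
      simp [dotProduct, sq_abs, pow_two]
    nlinarith [abs_nonneg (v ⬝ᵥ (F.adjMat *ᵥ v)), neg_abs_le (v ⬝ᵥ (F.adjMat *ᵥ v))]
  -- each eigenvalue is in the set
  have hmem : ∀ i, hA.eigenvalues i ∈
      {t : ℝ | ∃ x : F.V → ℝ, x ≠ 0 ∧ F.adjMat.mulVec x = t • x} := by
    intro i
    refine ⟨(WithLp.equiv 2 ((j : F.V) → ℝ)) (hA.eigenvectorBasis i), ?_,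
      hA.mulVec_eigenvectorBasis i⟩
    intro h0
    exact hA.eigenvectorBasis.orthonormal.ne_zero i
      ((WithLp.equiv 2 ((j : F.V) → ℝ)).injective (by simpa using h0))
  have heval : ∀ i, -c ≤ hA.eigenvalues i := fun i =>
    le_trans h (csInf_le hbdd (hmem i))
  -- spectral decomposition
  have hdiagadd : Matrix.diagonal (fun i => hA.eigenvalues i + c)
      = Matrix.diagonal hA.eigenvalues + c • (1 : Matrix F.V F.V ℝ) := by
    ext i j
    by_cases hij : i = j <;>
      simp [Matrix.diagonal, Matrix.one_apply, hij]
  have hU : (hA.eigenvectorUnitary : Matrix F.V F.V ℝ) *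
      star (hA.eigenvectorUnitary : Matrix F.V F.V ℝ) = 1 :=
    Matrix.mem_unitaryGroup_iff.mp hA.eigenvectorUnitary.2
  have hkey : F.adjMat + c • (1 : Matrix F.V F.V ℝ)
      = (hA.eigenvectorUnitary : Matrix F.V F.V ℝ) *
          Matrix.diagonal (fun i => hA.eigenvalues i + c) *
          (hA.eigenvectorUnitary : Matrix F.V F.V ℝ)ᴴ := by
    conv_lhs => rw [hA.spectral_theorem, Unitary.conjStarAlgAut_apply]
    have hof : (Matrix.diagonal (RCLike.ofReal ∘ hA.eigenvalues) : Matrix F.V F.V ℝ)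
        = Matrix.diagonal hA.eigenvalues := by
      congr 1
    rw [hof, hdiagadd, Matrix.mul_add, Matrix.add_mul, ← Matrix.star_eq_conjTranspose,
      mul_smul_comm, mul_one, smul_mul_assoc, hU]
  rw [hkey]
  refine Matrix.PosSemidef.mul_mul_conjTranspose_same ?_ _
  refine Matrix.PosSemidef.diagonal ?_
  intro i
  have := heval i
  simp only [Pi.zero_apply]
  linarith

lemma y_props (x : ℝ) (hx : 2 ≤ x) :
    0 < x/2 - Real.sqrt (x^2/4 - 1) ∧
    (x/2 - Real.sqrt (x^2/4 - 1)) * (x/2 - Real.sqrt (x^2/4 - 1)) + 1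
      = x * (x/2 - Real.sqrt (x^2/4 - 1)) ∧
    (2 < x → x/2 - Real.sqrt (x^2/4 - 1) < 1) := by
  have h4 : (0:ℝ) ≤ x^2/4 - 1 := by nlinarith
  have hs := Real.sq_sqrt h4
  have hs0 := Real.sqrt_nonneg (x^2/4 - 1)
  set s := Real.sqrt (x^2/4 - 1) with hsdef
  have hprod : (x/2 - s) * (x/2 + s) = 1 := by nlinarith [hs]
  have hpos : 0 < x/2 + s := by linarith
  have hy0 : 0 < x/2 - s := by nlinarith [hprod, hpos]
  refine ⟨hy0, by nlinarith [hs], fun hx2 => ?_⟩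
  have hsp : 0 < s := by
    rw [hsdef]
    apply Real.sqrt_pos.mpr
    nlinarith
  nlinarith [hprod]

open scoped Classical in
/-- For every rooted graph `G` with root `v` and every real `x ≥ 2`, with
`y = x/2 - √(x²/4 - 1)`: `λ₁(G, 0^∞) ≥ -x` if and only if `A_G + xI - yE_{v,v}` is
positive semidefinite. -/
theorem lam1_rowing_limit_ge_iff_posSemidef (G : RootedGraph) (x : ℝ) (hx : 2 ≤ x)
    (y : ℝ) (hy : y = x / 2 - Real.sqrt (x ^ 2 / 4 - 1)) (L : ℝ)
    (hL : Filter.Tendsto (fun n : ℕ => (G.rowing (List.replicate n 0)).lam1)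
      Filter.atTop (nhds L)) :
    -x ≤ L ↔
      (G.adjMat + x • (1 : Matrix G.V G.V ℝ) -
        y • Matrix.single G.root G.root 1).PosSemidef := by
  have hyq : y * y + 1 = x * y := by rw [hy]; exact (y_props x hx).2.1
  have hy0 : 0 < y := by rw [hy]; exact (y_props x hx).1
  constructor
  · -- hard direction: -x ≤ L → PSD
    intro hLx
    refine Matrix.PosSemidef.of_dotProduct_mulVec_nonneg (M_herm _ _ _) fun z => ?_
    rw [show star z = z from funext fun _ => rfl]
    by_contra hneg
    push_neg at hneg
    rw [qf_split] at hneg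
    set g : ℝ → ℝ := fun t => z ⬝ᵥ (G.adjMat *ᵥ z) + t * (z ⬝ᵥ z)
      - (t/2 - Real.sqrt (t^2/4 - 1)) * (z G.root * z G.root) with hgdef
    have hgx : g x < 0 := by
      rw [hy] at hneg
      simpa [hgdef] using hneg
    have hgcont : Continuous g := by rw [hgdef]; fun_prop
    have hev : ∀ᶠ t in nhds x, g t < 0 :=
      (hgcont.continuousAt).eventually_lt_const hgx
    obtain ⟨δ, hδ0, hδ⟩ := Metric.eventually_nhds_iff.mp hev
    set x' : ℝ := x + δ/2 with hx'def
    have hxx' : x < x' := by rw [hx'def]; linarith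
    have hgx' : g x' < 0 := by
      apply hδ
      rw [Real.dist_eq, hx'def]
      rw [show x + δ/2 - x = δ/2 by ring, abs_of_pos (by linarith)]
      linarith
    set y' : ℝ := x'/2 - Real.sqrt (x'^2/4 - 1) with hy'def
    obtain ⟨hy'0, hy'q, hy'lt⟩ := y_props x' (by linarith)
    rw [← hy'def] at hy'0 hy'q hy'lt
    have hy'1 : y' < 1 := hy'lt (by linarith)
    -- iterate the witness along the path
    have iter : ∀ n, ∃ w : (G.rowing (List.replicate n 0)).V → ℝ,
        w ⬝ᵥ (((G.rowing (List.replicate n 0)).adjMat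
          + x' • (1 : Matrix (G.rowing (List.replicate n 0)).V
              (G.rowing (List.replicate n 0)).V ℝ)
          - y' • Matrix.single (G.rowing (List.replicate n 0)).root
              (G.rowing (List.replicate n 0)).root 1) *ᵥ w) = g x'
        ∧ w (G.rowing (List.replicate n 0)).root = (-y')^n * z G.root := by
      intro n
      induction n with
      | zero =>
        refine ⟨z, ?_, by rw [pow_zero, one_mul]; rfl⟩
        erw [qf_split]
        simp only [hgdef]
        rfl
      | succ n ih =>
        obtain ⟨w, hw1, hw2⟩ := ih
        rw [rowing_succ]
        refine ⟨Sum.elim w (fun _ => -y' * w (G.rowing (List.replicate n 0)).root), ?_, ?_⟩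
        · erw [step_wit _ x' y' (ne_of_gt hy'0) hy'q w]
          exact hw1
        · show -y' * w (G.rowing (List.replicate n 0)).root = (-y')^(n+1) * z G.root
          rw [hw2]; ring
    -- eventually both conditions hold
    have hev1 : ∀ᶠ n : ℕ in Filter.atTop,
        -x' ≤ (G.rowing (List.replicate n 0)).lam1 := by
      have hmem : Set.Ioi (L - (x' - x)) ∈ nhds L := Ioi_mem_nhds (by linarith)
      filter_upwards [hL hmem] with n hn
      have : L - (x' - x) < (G.rowing (List.replicate n 0)).lam1 := hn
      linarith
    have hev2 : ∀ᶠ n : ℕ in Filter.atTop,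
        (y'^2)^n * (y' * (z G.root * z G.root)) < -(g x') := by
      have ht : Filter.Tendsto (fun n : ℕ => (y'^2)^n * (y' * (z G.root * z G.root)))
          Filter.atTop (nhds 0) := by
        have := (tendsto_pow_atTop_nhds_zero_of_lt_one (sq_nonneg y')
          (by nlinarith : y'^2 < 1)).mul_const (y' * (z G.root * z G.root))
        simpa using this
      exact ht.eventually_lt_const (by linarith)
    obtain ⟨n, h1n, h2n⟩ := (hev1.and hev2).exists
    obtain ⟨w, hw1, hw2⟩ := iter n
    have hpsd := psd_of_neg_le_lam1 _ x' h1n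
    have h0 := hpsd.dotProduct_mulVec_nonneg w
    rw [show star w = w from funext fun _ => rfl] at h0
    have e1 := qf_split (G.rowing (List.replicate n 0)).adjMat x' y'
      (G.rowing (List.replicate n 0)).root w
    have e2 := qf_split (G.rowing (List.replicate n 0)).adjMat x' 0
      (G.rowing (List.replicate n 0)).root w
    simp only [zero_smul, sub_zero, zero_mul] at e2
    rw [e2] at h0
    rw [e1, hw2] at hw1
    have hpow : (-y')^n * z G.root * ((-y')^n * z G.root)
        = (y'^2)^n * (z G.root * z G.root) := by
      have h2 : (-y')^n * (-y')^n = (y'^2)^n := by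
        rw [← pow_add, ← two_mul, pow_mul, neg_sq]
      calc (-y')^n * z G.root * ((-y')^n * z G.root)
          = ((-y')^n * (-y')^n) * (z G.root * z G.root) := by ring
        _ = (y'^2)^n * (z G.root * z G.root) := by rw [h2]
    rw [hpow] at hw1
    nlinarith [hw1, h0, h2n]
  · -- easy direction: PSD → -x ≤ L
    intro hPSD
    have key : ∀ n, ((G.rowing (List.replicate n 0)).adjMat
        + x • (1 : Matrix (G.rowing (List.replicate n 0)).V (G.rowing (List.replicate n 0)).V ℝ)
        - y • Matrix.single (G.rowing (List.replicate n 0)).root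
            (G.rowing (List.replicate n 0)).root 1).PosSemidef := by
      intro n
      induction n with
      | zero => exact hPSD
      | succ n ih =>
        rw [rowing_succ]
        exact step_psd _ x y hy0 hyq ih
    have hn : ∀ n, -x ≤ (G.rowing (List.replicate n 0)).lam1 := by
      intro n
      apply neg_le_lam1 _ x (by linarith)
      have hadd := (key n).add (psd_smul_std _ y (le_of_lt hy0))
      have heq : ((G.rowing (List.replicate n 0)).adjMat
          + x • (1 : Matrix (G.rowing (List.replicate n 0)).V (G.rowing (List.replicate n 0)).V ℝ)
          - y • Matrix.single (G.rowing (List.replicate n 0)).root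
              (G.rowing (List.replicate n 0)).root 1)
          + y • Matrix.single (G.rowing (List.replicate n 0)).root
              (G.rowing (List.replicate n 0)).root 1
          = (G.rowing (List.replicate n 0)).adjMat
          + x • (1 : Matrix (G.rowing (List.replicate n 0)).V (G.rowing (List.replicate n 0)).V ℝ) := by
        abel
      rwa [heq] at hadd
    exact ge_of_tendsto hL (Filter.Eventually.of_forall hn)
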